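/- Let Ω be a probability space and let G₁₁, G₁₂, G₂₁, G₂₂ : Ω → ℂ be mutually independent random variables, each with E[G_{ij}] = 0 and E[|G_{ij}|²] < ∞. Let λ_V, λ_H ≥ 0 and ρ ∈ ℝ, and let G(ω) be the 2×2 complex matrix with entries G_{ij}(ω) and Λ = diag(λ_V, λ_H). Then E[(det(I₂ + ρ•G·Λ·G†)).re] = 1 + ρ·λ_V·E[|G₁₁|² + |G₂₁|²] + ρ·λ_H·E[|G₁₂|² + |G₂₂|²] + ρ²·λ_V·λ_H·(E[|G₁₁|²]·E[|G₂₂|²] + E[|G₁₂|²]·E[|G₂₁|²]). -/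

import Mathlib

open MeasureTheory Matrix ComplexConjugate

theorem stmt_15 {Ω : Type*} [MeasureSpace Ω] [IsProbabilityMeasure (volume : Measure Ω)]
    (G : Ω → Matrix (Fin 2) (Fin 2) ℂ)
    (hmeas : ∀ i j, Measurable fun ω => G ω i j)
    (hindep : ProbabilityTheory.iIndepFun
      (fun (p : Fin 2 × Fin 2) ω => G ω p.1 p.2) volume)
    (hmean : ∀ i j, (∫ ω, G ω i j) = 0)
    (hL2 : ∀ i j, Integrable fun ω => ‖G ω i j‖ ^ 2)
    (lV lH ρ : ℝ) (hlV : 0 ≤ lV) (hlH : 0 ≤ lH) :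
    (∫ ω, ((1 + ρ • (G ω * Matrix.diagonal ![(lV : ℂ), (lH : ℂ)] * (G ω)ᴴ)).det).re) =
      1 + ρ * lV * (∫ ω, (‖G ω 0 0‖ ^ 2 + ‖G ω 1 0‖ ^ 2))
        + ρ * lH * (∫ ω, (‖G ω 0 1‖ ^ 2 + ‖G ω 1 1‖ ^ 2))
        + ρ ^ 2 * lV * lH * ((∫ ω, ‖G ω 0 0‖ ^ 2) * (∫ ω, ‖G ω 1 1‖ ^ 2)
          + (∫ ω, ‖G ω 0 1‖ ^ 2) * (∫ ω, ‖G ω 1 0‖ ^ 2)) := by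
  have hmeas' : ∀ p : Fin 2 × Fin 2, Measurable (fun ω => G ω p.1 p.2) := fun p => hmeas p.1 p.2
  -- integrability of entries
  have hInt : ∀ i j, Integrable (fun ω => G ω i j) := by
    intro i j
    refine Integrable.mono' ((integrable_const (1:ℝ)).add (hL2 i j))
      (hmeas i j).aestronglyMeasurable (ae_of_all _ fun ω => ?_)
    simp only [Pi.add_apply]
    have h := sq_nonneg (‖G ω i j‖ - 1)
    nlinarith [norm_nonneg (G ω i j)]
  -- re/im means are zero
  have hre : ∀ i j, (∫ ω, (G ω i j).re) = 0 := by
    intro i j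
    have h := integral_re (μ := (volume : Measure Ω)) (hInt i j)
    rw [hmean i j] at h
    simpa using h
  have him : ∀ i j, (∫ ω, (G ω i j).im) = 0 := by
    intro i j
    have h := integral_im (μ := (volume : Measure Ω)) (hInt i j)
    rw [hmean i j] at h
    simpa using h
  -- Z and W
  set Z : Ω → ℂ := fun ω => G ω 0 0 * conj (G ω 1 0) with hZdef
  set W : Ω → ℂ := fun ω => conj (G ω 0 1) * G ω 1 1 with hWdef
  -- independence of Z and W
  have hpair := hindep.indepFun_prodMk_prodMk hmeas'
    ((0 : Fin 2), (0 : Fin 2)) (1, 0) (0, 1) (1, 1) (by decide) (by decide) (by decide) (by decide)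
  have hZW : ProbabilityTheory.IndepFun Z W volume := by
    have hφ : Measurable (fun p : ℂ × ℂ => p.1 * conj p.2) := by
      exact measurable_fst.mul (continuous_star.measurable.comp measurable_snd)
    have hψ : Measurable (fun p : ℂ × ℂ => conj p.1 * p.2) := by
      exact (continuous_star.measurable.comp measurable_fst).mul measurable_snd
    exact hpair.comp hφ hψ
  -- pairwise independence of entries
  have hpw : ∀ (p q : Fin 2 × Fin 2), p ≠ q →
      ProbabilityTheory.IndepFun (fun ω => G ω p.1 p.2) (fun ω => G ω q.1 q.2) volume :=
    fun p q h => hindep.indepFun h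
  -- mean-zero products of components of distinct entries
  have hcompInt : ∀ (i j : Fin 2) (f : ℂ → ℝ), f = Complex.re ∨ f = Complex.im →
      Integrable (fun ω => f (G ω i j)) := by
    rintro i j f (rfl | rfl)
    · exact (hInt i j).re
    · exact (hInt i j).im
  have hmul0 : ∀ (f g : ℂ → ℝ), (f = Complex.re ∨ f = Complex.im) →
      (g = Complex.re ∨ g = Complex.im) → ∀ (p q : Fin 2 × Fin 2), p ≠ q →
      (∫ ω, f (G ω p.1 p.2) * g (G ω q.1 q.2)) = 0 := by
    intro f g hf hg p q hpq
    have hmf : Measurable f := by rcases hf with rfl | rfl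
      <;> [exact Complex.measurable_re; exact Complex.measurable_im]
    have hmg : Measurable g := by rcases hg with rfl | rfl
      <;> [exact Complex.measurable_re; exact Complex.measurable_im]
    have hind := (hpw p q hpq).comp hmf hmg
    have h : (∫ ω, f (G ω p.1 p.2) * g (G ω q.1 q.2))
        = (∫ ω, f (G ω p.1 p.2)) * ∫ ω, g (G ω q.1 q.2) := by
      exact hind.integral_mul_eq_mul_integral (hcompInt p.1 p.2 f hf).1 (hcompInt q.1 q.2 g hg).1
    have hz : (∫ ω, f (G ω p.1 p.2)) = 0 := by
      rcases hf with rfl | rfl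
      · exact hre p.1 p.2
      · exact him p.1 p.2
    rw [h, hz, zero_mul]
  have hcompMul : ∀ (f g : ℂ → ℝ), (f = Complex.re ∨ f = Complex.im) →
      (g = Complex.re ∨ g = Complex.im) → ∀ (p q : Fin 2 × Fin 2), p ≠ q →
      Integrable (fun ω => f (G ω p.1 p.2) * g (G ω q.1 q.2)) := by
    intro f g hf hg p q hpq
    have hmf : Measurable f := by rcases hf with rfl | rfl
      <;> [exact Complex.measurable_re; exact Complex.measurable_im]
    have hmg : Measurable g := by rcases hg with rfl | rfl
      <;> [exact Complex.measurable_re; exact Complex.measurable_im]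
    exact ((hpw p q hpq).comp hmf hmg).integrable_mul
      (hcompInt p.1 p.2 f hf) (hcompInt q.1 q.2 g hg)
  -- integrability of Z, W
  have hIntZ : Integrable Z := by
    refine Integrable.mono' ((hL2 0 0).add (hL2 1 0))
      ((hmeas 0 0).mul (continuous_star.measurable.comp (hmeas 1 0))).aestronglyMeasurable
      (ae_of_all _ fun ω => ?_)
    simp only [Pi.add_apply]
    have : ‖Z ω‖ = ‖G ω 0 0‖ * ‖G ω 1 0‖ := by simp [hZdef, norm_mul]
    rw [this]
    nlinarith [sq_nonneg (‖G ω 0 0‖ - ‖G ω 1 0‖), norm_nonneg (G ω 0 0), norm_nonneg (G ω 1 0)]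
  have hIntW : Integrable W := by
    refine Integrable.mono' ((hL2 0 1).add (hL2 1 1))
      ((continuous_star.measurable.comp (hmeas 0 1)).mul (hmeas 1 1)).aestronglyMeasurable
      (ae_of_all _ fun ω => ?_)
    simp only [Pi.add_apply]
    have : ‖W ω‖ = ‖G ω 0 1‖ * ‖G ω 1 1‖ := by simp [hWdef, norm_mul]
    rw [this]
    nlinarith [sq_nonneg (‖G ω 0 1‖ - ‖G ω 1 1‖), norm_nonneg (G ω 0 1), norm_nonneg (G ω 1 1)]
  -- means of re/im of Z, W are zero
  have hZre : (∫ ω, (Z ω).re) = 0 := by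
    have hfun : (fun ω => (Z ω).re) =
        fun ω => (G ω 0 0).re * (G ω 1 0).re + (G ω 0 0).im * (G ω 1 0).im := by
      funext ω; simp [hZdef, Complex.mul_re]
    rw [hfun, integral_add (hcompMul _ _ (Or.inl rfl) (Or.inl rfl) (0,0) (1,0) (by decide))
        (hcompMul _ _ (Or.inr rfl) (Or.inr rfl) (0,0) (1,0) (by decide)),
      hmul0 _ _ (Or.inl rfl) (Or.inl rfl) (0,0) (1,0) (by decide),
      hmul0 _ _ (Or.inr rfl) (Or.inr rfl) (0,0) (1,0) (by decide), add_zero]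
  have hZim : (∫ ω, (Z ω).im) = 0 := by
    have hfun : (fun ω => (Z ω).im) =
        fun ω => (G ω 0 0).im * (G ω 1 0).re - (G ω 0 0).re * (G ω 1 0).im := by
      funext ω; simp [hZdef, Complex.mul_im]; ring
    rw [hfun, integral_sub (hcompMul _ _ (Or.inr rfl) (Or.inl rfl) (0,0) (1,0) (by decide))
        (hcompMul _ _ (Or.inl rfl) (Or.inr rfl) (0,0) (1,0) (by decide)),
      hmul0 _ _ (Or.inr rfl) (Or.inl rfl) (0,0) (1,0) (by decide),
      hmul0 _ _ (Or.inl rfl) (Or.inr rfl) (0,0) (1,0) (by decide), sub_zero]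
  -- cross expectation is zero
  have hRR : ProbabilityTheory.IndepFun (fun ω => (Z ω).re) (fun ω => (W ω).re) volume :=
    hZW.comp Complex.measurable_re Complex.measurable_re
  have hII : ProbabilityTheory.IndepFun (fun ω => (Z ω).im) (fun ω => (W ω).im) volume :=
    hZW.comp Complex.measurable_im Complex.measurable_im
  have hIntRR : Integrable (fun ω => (Z ω).re * (W ω).re) := by
    exact hRR.integrable_mul hIntZ.re hIntW.re
  have hIntII : Integrable (fun ω => (Z ω).im * (W ω).im) := by
    exact hII.integrable_mul hIntZ.im hIntW.im
  have hcross : (∫ ω, ((Z ω).re * (W ω).re - (Z ω).im * (W ω).im)) = 0 := by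
    rw [integral_sub hIntRR hIntII]
    have h1 : (∫ ω, (Z ω).re * (W ω).re) = (∫ ω, (Z ω).re) * ∫ ω, (W ω).re := by
      exact hRR.integral_mul_eq_mul_integral hIntZ.re.1 hIntW.re.1
    have h2 : (∫ ω, (Z ω).im * (W ω).im) = (∫ ω, (Z ω).im) * ∫ ω, (W ω).im := by
      exact hII.integral_mul_eq_mul_integral hIntZ.im.1 hIntW.im.1
    rw [h1, h2, hZre, hZim]
    ring
  -- norm-square products
  have hnsq : ∀ (p q : Fin 2 × Fin 2), p ≠ q →
      ProbabilityTheory.IndepFun (fun ω => ‖G ω p.1 p.2‖ ^ 2) (fun ω => ‖G ω q.1 q.2‖ ^ 2)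
        volume := by
    intro p q hpq
    exact (hpw p q hpq).comp (measurable_norm.pow_const 2) (measurable_norm.pow_const 2)
  have hIntAD : Integrable (fun ω => ‖G ω 0 0‖ ^ 2 * ‖G ω 1 1‖ ^ 2) := by
    exact (hnsq (0,0) (1,1) (by decide)).integrable_mul (hL2 0 0) (hL2 1 1)
  have hIntBC : Integrable (fun ω => ‖G ω 0 1‖ ^ 2 * ‖G ω 1 0‖ ^ 2) := by
    exact (hnsq (0,1) (1,0) (by decide)).integrable_mul (hL2 0 1) (hL2 1 0)
  have hAD : (∫ ω, ‖G ω 0 0‖ ^ 2 * ‖G ω 1 1‖ ^ 2)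
      = (∫ ω, ‖G ω 0 0‖ ^ 2) * (∫ ω, ‖G ω 1 1‖ ^ 2) := by
    exact (hnsq (0,0) (1,1) (by decide)).integral_mul_eq_mul_integral (hL2 0 0).1 (hL2 1 1).1
  have hBC : (∫ ω, ‖G ω 0 1‖ ^ 2 * ‖G ω 1 0‖ ^ 2)
      = (∫ ω, ‖G ω 0 1‖ ^ 2) * (∫ ω, ‖G ω 1 0‖ ^ 2) := by
    exact (hnsq (0,1) (1,0) (by decide)).integral_mul_eq_mul_integral (hL2 0 1).1 (hL2 1 0).1
  -- pointwise identity
  have key : ∀ ω, ((1 + ρ • (G ω * Matrix.diagonal ![(lV : ℂ), (lH : ℂ)] * (G ω)ᴴ)).det).re =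
      1 + ρ * lV * (‖G ω 0 0‖ ^ 2 + ‖G ω 1 0‖ ^ 2) + ρ * lH * (‖G ω 0 1‖ ^ 2 + ‖G ω 1 1‖ ^ 2)
        + ρ ^ 2 * lV * lH * (‖G ω 0 0‖ ^ 2 * ‖G ω 1 1‖ ^ 2 + ‖G ω 0 1‖ ^ 2 * ‖G ω 1 0‖ ^ 2
          - 2 * ((Z ω).re * (W ω).re - (Z ω).im * (W ω).im)) := by
    intro ω
    simp only [hZdef, hWdef, Matrix.det_fin_two, Matrix.add_apply, Matrix.smul_apply,
      Matrix.one_apply, Matrix.mul_apply, Fin.sum_univ_two, Matrix.diagonal_apply,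
      conjTranspose_apply, Matrix.cons_val', Matrix.cons_val_zero, Matrix.cons_val_one,
      Matrix.head_cons, Complex.real_smul, Complex.sq_norm,
      Complex.normSq_apply]
    simp [Complex.ext_iff, Complex.add_re, Complex.mul_re, Complex.mul_im, Complex.add_im]
    ring
  simp only [key]
  -- assemble
  have hA : Integrable (fun ω => ρ * lV * (‖G ω 0 0‖ ^ 2 + ‖G ω 1 0‖ ^ 2)) := by
    exact ((hL2 0 0).add (hL2 1 0)).const_mul _
  have hB : Integrable (fun ω => ρ * lH * (‖G ω 0 1‖ ^ 2 + ‖G ω 1 1‖ ^ 2)) := by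
    exact ((hL2 0 1).add (hL2 1 1)).const_mul _
  have hq0 : Integrable (fun ω => ‖G ω 0 0‖ ^ 2 * ‖G ω 1 1‖ ^ 2 + ‖G ω 0 1‖ ^ 2 * ‖G ω 1 0‖ ^ 2
      - 2 * ((Z ω).re * (W ω).re - (Z ω).im * (W ω).im)) := by
    exact (hIntAD.add hIntBC).sub ((hIntRR.sub hIntII).const_mul 2)
  have hC : Integrable (fun ω => ρ ^ 2 * lV * lH *
      (‖G ω 0 0‖ ^ 2 * ‖G ω 1 1‖ ^ 2 + ‖G ω 0 1‖ ^ 2 * ‖G ω 1 0‖ ^ 2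
        - 2 * ((Z ω).re * (W ω).re - (Z ω).im * (W ω).im))) := by
    exact hq0.const_mul _
  have h1AB : Integrable (fun ω => 1 + ρ * lV * (‖G ω 0 0‖ ^ 2 + ‖G ω 1 0‖ ^ 2)
      + ρ * lH * (‖G ω 0 1‖ ^ 2 + ‖G ω 1 1‖ ^ 2)) := by
    exact ((integrable_const 1).add hA).add hB
  have h1A : Integrable (fun ω => 1 + ρ * lV * (‖G ω 0 0‖ ^ 2 + ‖G ω 1 0‖ ^ 2)) := by
    exact (integrable_const 1).add hA
  rw [integral_add h1AB hC, integral_add h1A hB, integral_add (integrable_const 1) hA,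
    integral_const, integral_const_mul, integral_const_mul, integral_const_mul]
  have hq : (∫ ω, (‖G ω 0 0‖ ^ 2 * ‖G ω 1 1‖ ^ 2 + ‖G ω 0 1‖ ^ 2 * ‖G ω 1 0‖ ^ 2
      - 2 * ((Z ω).re * (W ω).re - (Z ω).im * (W ω).im))) =
      (∫ ω, ‖G ω 0 0‖ ^ 2) * (∫ ω, ‖G ω 1 1‖ ^ 2)
        + (∫ ω, ‖G ω 0 1‖ ^ 2) * (∫ ω, ‖G ω 1 0‖ ^ 2) := by
    have h2c : Integrable (fun ω => 2 * ((Z ω).re * (W ω).re - (Z ω).im * (W ω).im)) := by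
      exact (hIntRR.sub hIntII).const_mul 2
    have hADBC : Integrable (fun ω => ‖G ω 0 0‖ ^ 2 * ‖G ω 1 1‖ ^ 2
        + ‖G ω 0 1‖ ^ 2 * ‖G ω 1 0‖ ^ 2) := by exact hIntAD.add hIntBC
    rw [integral_sub hADBC h2c, integral_add hIntAD hIntBC,
      integral_const_mul, hcross, hAD, hBC]
    ring
  rw [hq]
  simp
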